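/- Let G be a graph with n vertices and p·C(n,2) edges, where p = e(G)/C(n,2). Then there is an ordering v_1, …, v_n of the vertices such that |e({v_1,…,v_ℓ}) − p·C(ℓ,2)| ≤ max{p, 1−p}·(n−1) for all ℓ ∈ {1,…,n}. -/

import Mathlib

open Finset

variable {n : ℕ} (G : SimpleGraph (Fin n)) [DecidableRel G.Adj]

noncomputable def eS (S : Finset (Fin n)) : ℕ := (G.edgeFinset ∩ S.sym2).card

lemma eS_empty : eS G (∅ : Finset (Fin n)) = 0 := by
  simp [eS, Finset.sym2_empty]

lemma inter_erase_sym2 (S : Finset (Fin n)) (v : Fin n) :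
    G.edgeFinset ∩ (S.erase v).sym2
      = (G.edgeFinset ∩ S.sym2).filter (fun e => v ∉ e) := by
  ext e
  induction e with
  | _ a b =>
    simp only [Finset.mem_inter, Finset.mem_filter, Finset.mk_mem_sym2_iff,
      Finset.mem_erase, Sym2.mem_iff, SimpleGraph.mem_edgeFinset, SimpleGraph.mem_edgeSet]
    constructor
    · rintro ⟨h, ⟨ha1, ha2⟩, ⟨hb1, hb2⟩⟩
      exact ⟨⟨h, ha2, hb2⟩, by push_neg; exact ⟨fun e => (ha1 e.symm).elim, fun e => (hb1 e.symm).elim⟩⟩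
    · rintro ⟨⟨h, ha, hb⟩, hv⟩
      push_neg at hv
      exact ⟨h, ⟨fun e => hv.1 e.symm, ha⟩, ⟨fun e => hv.2 e.symm, hb⟩⟩

lemma eS_erase (S : Finset (Fin n)) (v : Fin n) (hv : v ∈ S) :
    eS G S = eS G (S.erase v) + ((S.erase v).filter (G.Adj v)).card := by
  classical
  unfold eS
  rw [inter_erase_sym2]
  rw [← Finset.card_filter_add_card_filter_not (s := G.edgeFinset ∩ S.sym2)
      (p := fun e => v ∈ e)]
  rw [Nat.add_comm]
  congr 1
  symm
  apply Finset.card_bij (fun u _ => s(v, u))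
  · intro u hu
    simp only [Finset.mem_filter, Finset.mem_erase] at hu
    obtain ⟨⟨hune, huS⟩, hadj⟩ := hu
    simp only [Finset.mem_filter, Finset.mem_inter, Finset.mk_mem_sym2_iff,
      SimpleGraph.mem_edgeFinset, SimpleGraph.mem_edgeSet, Sym2.mem_iff]
    exact ⟨⟨hadj, hv, huS⟩, Or.inl trivial⟩
  · intro u1 h1 u2 h2 heq
    simp only [Finset.mem_filter, Finset.mem_erase] at h1 h2
    rw [Sym2.eq_iff] at heq
    rcases heq with ⟨_, h⟩ | ⟨h, h'⟩
    · exact h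
    · exact (h1.1.1 h').elim
  · intro e he
    simp only [Finset.mem_filter, Finset.mem_inter, SimpleGraph.mem_edgeFinset,
      SimpleGraph.mem_edgeSet] at he
    obtain ⟨⟨hE, hS⟩, hvmem⟩ := he
    induction e with
    | _ a b =>
      rw [Finset.mk_mem_sym2_iff] at hS
      rw [Sym2.mem_iff] at hvmem
      rcases hvmem with rfl | rfl
      · refine ⟨b, ?_, rfl⟩
        simp only [Finset.mem_filter, Finset.mem_erase]
        exact ⟨⟨fun h => G.irrefl (h ▸ hE), hS.2⟩, hE⟩
      · refine ⟨a, ?_, Sym2.eq_swap⟩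
        simp only [Finset.mem_filter, Finset.mem_erase]
        exact ⟨⟨fun h => G.irrefl (h ▸ hE), hS.1⟩, G.adj_symm hE⟩

lemma filter_mem_edge_card (S : Finset (Fin n)) (e : Sym2 (Fin n))
    (he : e ∈ G.edgeFinset ∩ S.sym2) :
    (S.filter (fun v => v ∈ e)).card = 2 := by
  induction e with
  | _ a b =>
    simp only [Finset.mem_inter, SimpleGraph.mem_edgeFinset, SimpleGraph.mem_edgeSet,
      Finset.mk_mem_sym2_iff] at he
    obtain ⟨hadj, haS, hbS⟩ := he
    have hne : a ≠ b := G.ne_of_adj hadj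
    have : S.filter (fun v => v ∈ s(a, b)) = {a, b} := by
      ext x
      simp only [Finset.mem_filter, Sym2.mem_iff, Finset.mem_insert, Finset.mem_singleton]
      constructor
      · rintro ⟨_, h⟩; exact h
      · rintro (rfl | rfl) <;> simp [haS, hbS]
    rw [this, Finset.card_pair hne]

lemma sum_eS_erase (S : Finset (Fin n)) :
    ∑ v ∈ S, eS G (S.erase v) = (S.card - 2) * eS G S := by
  classical
  have h1 : ∀ v ∈ S, eS G (S.erase v)
      = ∑ e ∈ G.edgeFinset ∩ S.sym2, if v ∉ e then 1 else 0 := by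
    intro v _
    unfold eS
    rw [inter_erase_sym2, Finset.sum_boole, Nat.cast_id]
  rw [Finset.sum_congr rfl h1, Finset.sum_comm]
  have h2 : ∀ e ∈ G.edgeFinset ∩ S.sym2,
      (∑ v ∈ S, if v ∉ e then 1 else 0) = S.card - 2 := by
    intro e he
    rw [Finset.sum_boole]
    have : S.filter (fun v => v ∉ e) = S \ S.filter (fun v => v ∈ e) :=
      Finset.filter_not _ _
    rw [this, Finset.card_sdiff_of_subset (Finset.filter_subset _ _), filter_mem_edge_card G S e he,
      Nat.cast_id]
  rw [Finset.sum_congr rfl h2, Finset.sum_const, smul_eq_mul, mul_comm]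
  rfl

noncomputable def fval (p : ℝ) (ℓ : ℕ) (S : Finset (Fin n)) : ℝ :=
  (eS G S : ℝ) - p * (ℓ.choose 2)

def GInv (p : ℝ) (ℓ : ℕ) (S : Finset (Fin n)) : Prop :=
  S.card = ℓ ∧ -((1 - p) * ((n : ℝ) - 1)) ≤ fval G p ℓ S ∧ fval G p ℓ S ≤ p * ((n : ℝ) - 1)

lemma step_lemma (p : ℝ) (hn : 1 ≤ n) (hp0 : 0 ≤ p) (hp1 : p ≤ 1) (ℓ : ℕ)
    (hℓ : 1 ≤ ℓ) (hℓn : ℓ ≤ n) (S : Finset (Fin n)) (hInv : GInv G p ℓ S) :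
    ∃ v ∈ S, GInv G p (ℓ - 1) (S.erase v) := by
  classical
  obtain ⟨hcard, hlow, hhigh⟩ := hInv
  have hne : S.Nonempty := Finset.card_pos.mp (by omega)
  have hn1 : (1 : ℝ) ≤ (n : ℝ) := by exact_mod_cast hn
  rcases Nat.lt_or_ge ℓ 2 with h2 | h2
  · -- ℓ = 1
    have hℓ1 : ℓ = 1 := by omega
    subst hℓ1
    obtain ⟨v, hv⟩ := hne
    have hers : S.erase v = ∅ := by
      rw [← Finset.card_eq_zero, Finset.card_erase_of_mem hv, hcard]
    refine ⟨v, hv, ?_, ?_, ?_⟩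
    · rw [Finset.card_erase_of_mem hv, hcard]
    · rw [hers]
      simp only [fval, eS_empty]
      have : ((Nat.choose 0 2 : ℕ) : ℝ) = 0 := by norm_num
      rw [this]
      push_cast
      nlinarith [mul_nonneg (by linarith : (0:ℝ) ≤ 1 - p) (by linarith : (0:ℝ) ≤ (n:ℝ) - 1)]
    · rw [hers]
      simp only [fval, eS_empty]
      have : ((Nat.choose 0 2 : ℕ) : ℝ) = 0 := by norm_num
      rw [this]
      push_cast
      nlinarith [mul_nonneg hp0 (by linarith : (0:ℝ) ≤ (n:ℝ) - 1)]
  · -- ℓ ≥ 2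
    obtain ⟨m, rfl⟩ : ∃ m, ℓ = m + 2 := ⟨ℓ - 2, by omega⟩
    have hcardS : S.card = m + 2 := hcard
    have hmn : (m : ℝ) + 1 ≤ (n : ℝ) - 1 := by
      have : m + 2 ≤ n := hℓn
      have := (Nat.cast_le (α := ℝ)).mpr this
      push_cast at this ⊢
      linarith
    have C2 : ((Nat.choose (m + 2) 2 : ℕ) : ℝ) = ((m : ℝ) + 2) * ((m : ℝ) + 1) / 2 := by
      rw [Nat.cast_choose_two]; push_cast; ring
    have C1 : ((Nat.choose (m + 2 - 1) 2 : ℕ) : ℝ) = ((m : ℝ) + 1) * (m : ℝ) / 2 := by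
      have : m + 2 - 1 = m + 1 := by omega
      rw [this, Nat.cast_choose_two]; push_cast; ring
    -- generic bounds on eS of erase
    have hgen : ∀ v ∈ S, eS G (S.erase v) ≤ eS G S ∧ eS G S ≤ eS G (S.erase v) + (m + 1) := by
      intro v hv
      have h := eS_erase G S v hv
      have hd : ((S.erase v).filter (G.Adj v)).card ≤ m + 1 := by
        calc ((S.erase v).filter (G.Adj v)).card ≤ (S.erase v).card :=
              Finset.card_filter_le _ _
          _ = m + 1 := by rw [Finset.card_erase_of_mem hv]; omega
      refine ⟨?_, ?_⟩
      · rw [h]; exact Nat.le_add_right _ _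
      · rw [h]; exact Nat.add_le_add_left hd _
    have hsum := sum_eS_erase G S
    by_cases hc : 0 ≤ fval G p (m + 2) S
    · -- choose minimizer
      obtain ⟨v, hvS, hmin⟩ := Finset.exists_min_image S (fun v => eS G (S.erase v)) hne
      have hNsum : (m + 2) * eS G (S.erase v) ≤ m * eS G S := by
        have h1 : S.card • eS G (S.erase v) ≤ ∑ w ∈ S, eS G (S.erase w) :=
          Finset.card_nsmul_le_sum S _ _ (fun w hw => hmin w hw)
        rw [hsum, hcardS] at h1
        simpa [smul_eq_mul] using h1
      have hR : ((m : ℝ) + 2) * (eS G (S.erase v) : ℝ) ≤ (m : ℝ) * (eS G S : ℝ) := by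
        exact_mod_cast hNsum
      obtain ⟨hle, hge⟩ := hgen v hvS
      have hleR : (eS G (S.erase v) : ℝ) ≤ (eS G S : ℝ) := by exact_mod_cast hle
      have hgeR : (eS G S : ℝ) ≤ (eS G (S.erase v) : ℝ) + ((m : ℝ) + 1) := by
        exact_mod_cast hge
      simp only [fval, C2] at hc hlow hhigh
      have hm2 : (0:ℝ) < (m : ℝ) + 2 := by positivity
      have h3 : ((m:ℝ)+2) * (eS G (S.erase v) : ℝ)
          ≤ ((m:ℝ)+2) * ((eS G S : ℝ) - p * ((m:ℝ)+1)) := by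
        have hexp : ((m:ℝ)+2) * ((eS G S : ℝ) - p * ((m:ℝ)+1))
            = (m:ℝ) * (eS G S : ℝ)
              + 2 * ((eS G S : ℝ) - p * (((m:ℝ)+2) * ((m:ℝ)+1) / 2)) := by ring
        rw [hexp]
        linarith
      have hkey : (eS G (S.erase v) : ℝ) ≤ (eS G S : ℝ) - p * ((m : ℝ) + 1) :=
        (mul_le_mul_iff_right₀ hm2).mp h3
      refine ⟨v, hvS, ?_, ?_, ?_⟩
      · rw [Finset.card_erase_of_mem hvS, hcardS]
      · simp only [fval, C1]
        linarith [mul_le_mul_of_nonneg_left hmn (by linarith : (0:ℝ) ≤ 1 - p)]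
      · simp only [fval, C1]
        linarith
    · -- choose maximizer
      push_neg at hc
      obtain ⟨v, hvS, hmax⟩ := Finset.exists_max_image S (fun v => eS G (S.erase v)) hne
      have hNsum : m * eS G S ≤ (m + 2) * eS G (S.erase v) := by
        have h1 : ∑ w ∈ S, eS G (S.erase w) ≤ S.card • eS G (S.erase v) :=
          Finset.sum_le_card_nsmul S _ _ (fun w hw => hmax w hw)
        rw [hsum, hcardS] at h1
        simpa [smul_eq_mul] using h1
      have hR : (m : ℝ) * (eS G S : ℝ) ≤ ((m : ℝ) + 2) * (eS G (S.erase v) : ℝ) := by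
        exact_mod_cast hNsum
      obtain ⟨hle, hge⟩ := hgen v hvS
      have hleR : (eS G (S.erase v) : ℝ) ≤ (eS G S : ℝ) := by exact_mod_cast hle
      simp only [fval, C2] at hc hlow hhigh
      have hm2 : (0:ℝ) < (m : ℝ) + 2 := by positivity
      have h3 : ((m:ℝ)+2) * ((eS G S : ℝ) - p * ((m:ℝ)+1))
          ≤ ((m:ℝ)+2) * (eS G (S.erase v) : ℝ) := by
        have hexp : ((m:ℝ)+2) * ((eS G S : ℝ) - p * ((m:ℝ)+1))
            = (m:ℝ) * (eS G S : ℝ)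
              + 2 * ((eS G S : ℝ) - p * (((m:ℝ)+2) * ((m:ℝ)+1) / 2)) := by ring
        rw [hexp]
        linarith
      have hkey : (eS G S : ℝ) - p * ((m : ℝ) + 1) ≤ (eS G (S.erase v) : ℝ) :=
        (mul_le_mul_iff_right₀ hm2).mp h3
      refine ⟨v, hvS, ?_, ?_, ?_⟩
      · rw [Finset.card_erase_of_mem hvS, hcardS]
      · simp only [fval, C1]
        linarith
      · simp only [fval, C1]
        linarith [mul_le_mul_of_nonneg_left hmn hp0]

open scoped Classical in
noncomputable def chain (p : ℝ) : ℕ → Finset (Fin n)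
  | 0 => Finset.univ
  | (k + 1) =>
      if h : ∃ v ∈ chain p k, GInv G p (n - k - 1) ((chain p k).erase v)
      then (chain p k).erase h.choose
      else chain p k

lemma chain_succ_subset (p : ℝ) (k : ℕ) : chain G p (k + 1) ⊆ chain G p k := by
  rw [chain]
  split_ifs with h
  · exact Finset.erase_subset _ _
  · exact subset_rfl

lemma chain_anti (p : ℝ) {k k' : ℕ} (h : k ≤ k') : chain G p k' ⊆ chain G p k := by
  induction k' with
  | zero => simp_all
  | succ k' ih =>
    rcases Nat.lt_or_ge k (k' + 1) with h' | h'
    · exact (chain_succ_subset G p k').trans (ih (by omega))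
    · have : k = k' + 1 := by omega
      subst this; exact subset_rfl

lemma chain_inv (p : ℝ) (hn : 1 ≤ n) (hp0 : 0 ≤ p) (hp1 : p ≤ 1)
    (h0 : GInv G p n Finset.univ) :
    ∀ k, k ≤ n → GInv G p (n - k) (chain G p k) := by
  intro k
  induction k with
  | zero => intro _; simpa [chain] using h0
  | succ k ih =>
    intro hk
    have hstep := step_lemma G p hn hp0 hp1 (n - k) (by omega) (by omega)
      (chain G p k) (ih (by omega))
    rw [chain, dif_pos hstep]
    have h2 := hstep.choose_spec.2
    rw [show n - (k + 1) = n - k - 1 from by omega]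
    exact h2

/-- For a graph with `n` vertices and edge density `p = e(G)/C(n,2)` there is an ordering
of the vertices with `|e({v_1,…,v_ℓ}) − p·C(ℓ,2)| ≤ max{p, 1−p}·(n−1)` for all `ℓ`. -/
theorem stmt_6 (n : ℕ) (G : SimpleGraph (Fin n)) [DecidableRel G.Adj]
    (p : ℝ) (hp : p = (G.edgeFinset.card : ℝ) / (n.choose 2)) :
    ∃ σ : Equiv.Perm (Fin n), ∀ ℓ : ℕ, 1 ≤ ℓ → ℓ ≤ n →
      |((G.edgeFinset ∩ ((Finset.univ.filter (fun i : Fin n => (i : ℕ) < ℓ)).image σ).sym2).card : ℝ)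
          - p * (ℓ.choose 2)| ≤ max p (1 - p) * ((n : ℝ) - 1) := by
  classical
  rcases Nat.eq_zero_or_pos n with rfl | hn
  · exact ⟨1, fun ℓ h1 h2 => absurd (h1.trans h2) (by omega)⟩
  have hcle : G.edgeFinset.card ≤ n.choose 2 := by
    simpa using G.card_edgeFinset_le_card_choose_two
  have hp0 : 0 ≤ p := by rw [hp]; positivity
  have hp1 : p ≤ 1 := by
    rw [hp]
    rcases Nat.eq_zero_or_pos (n.choose 2) with h | h
    · simp [h]
    · rw [div_le_one (by exact_mod_cast h)]
      exact_mod_cast hcle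
  have hpe : p * ((n.choose 2 : ℕ) : ℝ) = (G.edgeFinset.card : ℝ) := by
    rcases Nat.eq_zero_or_pos (n.choose 2) with h | h
    · have h2 : G.edgeFinset.card = 0 := by omega
      simp [h, h2]
    · rw [hp, div_mul_cancel₀]
      exact_mod_cast h.ne'
  have hn1 : (0:ℝ) ≤ (n:ℝ) - 1 := by
    have : (1:ℝ) ≤ (n:ℝ) := by exact_mod_cast hn
    linarith
  have husym : (Finset.univ : Finset (Fin n)).sym2 = Finset.univ := by
    ext e; simp [Finset.mem_sym2_iff]
  have h0 : GInv G p n Finset.univ := by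
    refine ⟨by simp, ?_, ?_⟩ <;>
    · unfold fval eS
      rw [husym, Finset.inter_univ, hpe]
      nlinarith [mul_nonneg hp0 hn1, mul_nonneg (by linarith : (0:ℝ) ≤ 1 - p) hn1]
  set Sc : ℕ → Finset (Fin n) := fun ℓ => chain G p (n - ℓ) with hSc
  have hinv : ∀ ℓ, ℓ ≤ n → GInv G p ℓ (Sc ℓ) := by
    intro ℓ hℓ
    have := chain_inv G p hn hp0 hp1 h0 (n - ℓ) (by omega)
    rwa [Nat.sub_sub_self hℓ] at this
  have hmono : ∀ {a b : ℕ}, a ≤ b → Sc a ⊆ Sc b := by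
    intro a b hab
    exact chain_anti G p (by omega)
  have hdiff : ∀ i : Fin n, ∃ v, v ∈ Sc ((i : ℕ) + 1) ∧ v ∉ Sc (i : ℕ) := by
    intro i
    have h1 : (Sc ((i:ℕ)+1)).card = (i:ℕ)+1 := (hinv _ i.isLt).1
    have h2 : (Sc (i:ℕ)).card = (i:ℕ) := (hinv _ (le_of_lt i.isLt)).1
    have hns : ¬ (Sc ((i:ℕ)+1) ⊆ Sc (i:ℕ)) := fun h => by
      have := Finset.card_le_card h; omega
    obtain ⟨v, hv1, hv2⟩ := Finset.not_subset.mp hns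
    exact ⟨v, hv1, hv2⟩
  choose σf hσ1 hσ2 using hdiff
  have key : ∀ i j : Fin n, (i:ℕ) < (j:ℕ) → σf i ≠ σf j := by
    intro i j hlt heq
    have hmem : σf i ∈ Sc (j:ℕ) := hmono (by omega) (hσ1 i)
    rw [heq] at hmem
    exact hσ2 j hmem
  have hinj : Function.Injective σf := by
    intro i j hij
    by_contra hne
    have hv : (i:ℕ) ≠ (j:ℕ) := fun h => hne (Fin.ext h)
    rcases Nat.lt_or_ge (i:ℕ) (j:ℕ) with h | h
    · exact key i j h hij
    · exact key j i (by omega) hij.symm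
  let σ : Equiv.Perm (Fin n) :=
    Equiv.ofBijective σf ((Fintype.bijective_iff_injective_and_card σf).mpr ⟨hinj, rfl⟩)
  have hσcoe : ⇑σ = σf := rfl
  have himg : ∀ ℓ, ℓ ≤ n →
      (Finset.univ.filter (fun i : Fin n => (i : ℕ) < ℓ)).image σf = Sc ℓ := by
    intro ℓ
    induction ℓ with
    | zero =>
      intro _
      have h0' : (Sc 0).card = 0 := (hinv 0 (by omega)).1
      have he : Sc 0 = ∅ := Finset.card_eq_zero.mp h0'
      rw [he]
      simp
    | succ ℓ ih =>
      intro hℓ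
      have hfil : Finset.univ.filter (fun i : Fin n => (i : ℕ) < ℓ + 1)
          = insert (⟨ℓ, by omega⟩ : Fin n)
              (Finset.univ.filter (fun i : Fin n => (i : ℕ) < ℓ)) := by
        ext i
        simp only [Finset.mem_filter, Finset.mem_univ, true_and, Finset.mem_insert]
        constructor
        · intro h
          rcases Nat.lt_or_ge (i:ℕ) ℓ with h' | h'
          · exact Or.inr h'
          · exact Or.inl (Fin.ext (by simp; omega))
        · rintro (rfl | h)
          · exact Nat.lt_succ_self ℓ
          · omega
      rw [hfil, Finset.image_insert, ih (by omega)]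
      have hmem : σf ⟨ℓ, by omega⟩ ∈ Sc (ℓ + 1) := by
        have := hσ1 ⟨ℓ, by omega⟩; simpa using this
      have hnot : σf ⟨ℓ, by omega⟩ ∉ Sc ℓ := by
        have := hσ2 ⟨ℓ, by omega⟩; simpa using this
      apply Finset.eq_of_subset_of_card_le
      · intro x hx
        rcases Finset.mem_insert.mp hx with rfl | hx
        · exact hmem
        · exact hmono (Nat.le_succ ℓ) hx
      · rw [(hinv (ℓ+1) hℓ).1, Finset.card_insert_of_notMem hnot, (hinv ℓ (by omega)).1]
  refine ⟨σ, ?_⟩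
  intro ℓ h1 h2
  rw [hσcoe, himg ℓ h2]
  obtain ⟨_, hlo, hhi⟩ := hinv ℓ h2
  simp only [fval, eS] at hlo hhi
  rw [abs_le]
  constructor
  · have : (1 - p) * ((n:ℝ)-1) ≤ max p (1-p) * ((n:ℝ)-1) :=
      mul_le_mul_of_nonneg_right (le_max_right _ _) hn1
    linarith
  · have : p * ((n:ℝ)-1) ≤ max p (1-p) * ((n:ℝ)-1) :=
      mul_le_mul_of_nonneg_right (le_max_left _ _) hn1
    linarith
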